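/- Let r ≥ 1 and let A be the matrix over F_2, with rows and columns indexed by F_2^r, defined by A_{u,w} = 1 if u + w is a standard basis vector e_i for some 1 ≤ i ≤ r (equivalently, u and w differ in exactly one coordinate), and A_{u,w} = 0 otherwise (this is the adjacency matrix over F_2 of the r-dimensional hypercube graph, the coset graph of the zero-codeword-only code). Then the rank of A over F_2 equals 2^r if r is odd, and equals 2^{r-1} if r is even. -/

import Mathlib

theorem rank_hypercube (r : ℕ) (hr : 1 ≤ r)
    (A : Matrix (Fin r → ZMod 2) (Fin r → ZMod 2) (ZMod 2))
    (hA : ∀ u w, A u w = if ∃ i : Fin r, u + w = Pi.single i 1 then 1 else 0) :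
    (Odd r → A.rank = 2 ^ r) ∧ (Even r → A.rank = 2 ^ (r - 1)) := by
  classical
  have hself : ∀ a : ZMod 2, a + a = 0 := by decide
  have hsolve : ∀ a b : ZMod 2, a + b = 0 → a = b := by decide
  have hpself : ∀ v : Fin r → ZMod 2, v + v = 0 := fun v => funext fun x => hself _
  have hzero : ∀ a b : Fin r → ZMod 2, a = b ↔ a + b = 0 := by
    intro a b
    constructor
    · intro h; rw [h]; exact hpself b
    · intro h; funext x; exact hsolve _ _ (congrFun h x)
  have hcard : Fintype.card (Fin r → ZMod 2) = 2 ^ r := by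
    simp [Fintype.card_fun]
  have hsing : ∀ i j : Fin r, (Pi.single i 1 : Fin r → ZMod 2) = Pi.single j 1 → i = j := by
    intro i j h
    by_contra hne
    have h1 := congrFun h i
    rw [Pi.single_eq_same, Pi.single_eq_of_ne hne] at h1
    exact one_ne_zero h1
  have hsum : ∀ x : Fin r → ZMod 2,
      (if ∃ i : Fin r, x = Pi.single i 1 then (1 : ZMod 2) else 0)
        = ∑ i : Fin r, if x = Pi.single i 1 then 1 else 0 := by
    intro x
    by_cases h : ∃ i, x = Pi.single i 1
    · obtain ⟨i, rfl⟩ := h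
      rw [if_pos ⟨i, rfl⟩, Finset.sum_eq_single i]
      · simp
      · intro j _ hj
        rw [if_neg]
        intro hx
        exact hj (hsing i j hx).symm
      · simp
    · rw [if_neg h]
      symm
      exact Finset.sum_eq_zero fun j _ => if_neg fun hx => h ⟨j, hx⟩
  have hflip : ∀ a b c : Fin r → ZMod 2, (a + b = c) ↔ (b = a + c) := by
    intro a b c
    constructor
    · intro h; rw [← h, ← add_assoc, hpself a, zero_add]
    · intro h; rw [h, ← add_assoc, hpself a, zero_add]
  have hAA : A * A = Matrix.diagonal (fun _ => (r : ZMod 2)) := by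
    ext u w
    rw [Matrix.mul_apply]
    have step1 : ∀ v, A u v * A v w
        = ∑ i : Fin r, ∑ j : Fin r,
            (if v = u + Pi.single i 1 then (1 : ZMod 2) else 0)
              * (if v = w + Pi.single j 1 then 1 else 0) := by
      intro v
      rw [hA, hA, hsum, hsum, Finset.sum_mul_sum]
      refine Finset.sum_congr rfl fun i _ => Finset.sum_congr rfl fun j _ => ?_
      have e1 : (u + v = Pi.single i 1) ↔ (v = u + Pi.single i 1) := hflip u v _
      have e2 : (v + w = Pi.single j 1) ↔ (v = w + Pi.single j 1) := by
        rw [add_comm]; exact hflip w v _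
      rw [if_congr e1 rfl rfl, if_congr e2 rfl rfl]
    have step2 : (∑ v, A u v * A v w)
        = ∑ i : Fin r, ∑ j : Fin r,
            (if u + w = Pi.single i 1 + Pi.single j 1 then (1 : ZMod 2) else 0) := by
      calc (∑ v, A u v * A v w)
          = ∑ v, ∑ i : Fin r, ∑ j : Fin r,
              (if v = u + Pi.single i 1 then (1 : ZMod 2) else 0)
                * (if v = w + Pi.single j 1 then 1 else 0) :=
            Finset.sum_congr rfl fun v _ => step1 v
        _ = ∑ i : Fin r, ∑ j : Fin r, ∑ v,
              (if v = u + Pi.single i 1 then (1 : ZMod 2) else 0)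
                * (if v = w + Pi.single j 1 then 1 else 0) := by
            rw [Finset.sum_comm]
            exact Finset.sum_congr rfl fun i _ => Finset.sum_comm
        _ = ∑ i : Fin r, ∑ j : Fin r,
              (if u + Pi.single i 1 = w + Pi.single j 1 then (1 : ZMod 2) else 0) := by
            refine Finset.sum_congr rfl fun i _ => Finset.sum_congr rfl fun j _ => ?_
            simp only [ite_mul, one_mul, zero_mul, Finset.sum_ite_eq', Finset.mem_univ,
              if_true]
        _ = ∑ i : Fin r, ∑ j : Fin r,
              (if u + w = Pi.single i 1 + Pi.single j 1 then (1 : ZMod 2) else 0) := by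
            refine Finset.sum_congr rfl fun i _ => Finset.sum_congr rfl fun j _ => ?_
            refine if_congr ?_ rfl rfl
            rw [hzero (u + Pi.single i 1), hzero (u + w)]
            have hre : (u + Pi.single i 1) + (w + Pi.single j 1)
                = (u + w) + (Pi.single i 1 + Pi.single j 1) := by abel
            rw [hre]
    rw [step2]
    by_cases huw : u = w
    · subst huw
      have hc : ∀ i j : Fin r,
          (u + u = Pi.single i 1 + Pi.single j 1) ↔ i = j := by
        intro i j
        rw [hpself u]
        constructor
        · intro h
          exact hsing i j ((hzero _ _).mpr h.symm)
        · intro h; subst h; rw [eq_comm]; exact hpself _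
      have : (∑ i : Fin r, ∑ j : Fin r,
          (if u + u = Pi.single i 1 + Pi.single j 1 then (1 : ZMod 2) else 0))
          = ∑ i : Fin r, ∑ j : Fin r, (if i = j then (1 : ZMod 2) else 0) := by
        refine Finset.sum_congr rfl fun i _ => Finset.sum_congr rfl fun j _ =>
          if_congr (hc i j) rfl rfl
      rw [this, Matrix.diagonal_apply_eq]
      simp [Finset.sum_ite_eq']
    · rw [Matrix.diagonal_apply_ne _ huw, ← Finset.sum_product']
      refine Finset.sum_ninvolution Prod.swap ?_ ?_ (fun _ => Finset.mem_univ _)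
        (fun p => Prod.swap_swap p)
      · intro p
        have hcomm : (u + w = Pi.single p.2 1 + Pi.single p.1 1)
            ↔ (u + w = Pi.single p.1 1 + Pi.single p.2 1) :=
          ⟨fun h => h.trans (add_comm _ _), fun h => h.trans (add_comm _ _)⟩
        rw [Prod.fst_swap, Prod.snd_swap, if_congr hcomm rfl rfl]
        exact hself _
      · intro p hne hswap
        apply hne
        have hp : p.2 = p.1 := congrArg Prod.fst hswap
        rw [if_neg]
        intro h
        rw [hp, hpself] at h
        exact huw ((hzero u w).mpr h)
  constructor
  · intro hodd
    have h2 : (r : ZMod 2) = 1 := by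
      obtain ⟨k, rfl⟩ := hodd
      push_cast
      have : (2 : ZMod 2) = 0 := by decide
      rw [this]; ring
    have hone : A * A = 1 := by
      rw [hAA, h2, Matrix.diagonal_one]
    haveI := invertibleOfRightInverse A A hone
    rw [Matrix.rank_of_isUnit A (isUnit_of_invertible A), hcard]
  · intro heven
    have h2 : (r : ZMod 2) = 0 := by
      obtain ⟨k, rfl⟩ := heven
      push_cast
      exact hself _
    have hAA0 : A * A = 0 := by
      rw [hAA, h2, Matrix.diagonal_zero]
    have hub := Matrix.rank_add_rank_le_card_of_mul_eq_zero hAA0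
    rw [hcard] at hub
    obtain ⟨m, rfl⟩ : ∃ m, r = m + 1 := ⟨r - 1, (Nat.succ_pred_eq_of_pos hr).symm⟩
    set S := Fin m → ZMod 2
    let f : S → (Fin (m + 1) → ZMod 2) := fun v => Fin.snoc v 1
    let g : S → (Fin (m + 1) → ZMod 2) := fun v => Fin.snoc v 0
    let P : Matrix S (Fin (m + 1) → ZMod 2) (ZMod 2) :=
      Matrix.of fun i u => if u = f i then 1 else 0
    let Q : Matrix (Fin (m + 1) → ZMod 2) S (ZMod 2) :=
      Matrix.of fun u j => if u = g j then 1 else 0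
    have hPA : ∀ (i : S) v, (P * A) i v = A (f i) v := by
      intro i v
      rw [Matrix.mul_apply]
      simp [P, ite_mul, Finset.sum_ite_eq']
    have hPAQ : P * A * Q = 1 := by
      ext i j
      have : (P * A * Q) i j = A (f i) (g j) := by
        rw [Matrix.mul_apply]
        simp only [hPA]
        simp [Q, mul_ite, Finset.sum_ite_eq']
      rw [this, hA]
      have hadd : f i + g j = Fin.snoc (i + j) 1 := by
        funext x
        refine Fin.lastCases ?_ ?_ x
        · simp [f, g]
        · intro y; simp only [Pi.add_apply, f, g, Fin.snoc_castSucc]; rfl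
      have hkey : (∃ k : Fin (m + 1), f i + g j = Pi.single k 1) ↔ i = j := by
        rw [hadd]
        constructor
        · rintro ⟨k, hk⟩
          have hlast := congrFun hk (Fin.last m)
          rw [Fin.snoc_last] at hlast
          have hkval : k = Fin.last m := by
            by_contra hne
            rw [Pi.single_eq_of_ne (fun h => hne h.symm)] at hlast
            · exact one_ne_zero hlast
          subst hkval
          funext y
          have hy := congrFun hk (Fin.castSucc y)
          rw [Fin.snoc_castSucc, Pi.single_eq_of_ne (Fin.castSucc_lt_last y).ne] at hy
          exact hsolve _ _ hy
        · rintro rfl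
          refine ⟨Fin.last m, ?_⟩
          funext x
          refine Fin.lastCases ?_ ?_ x
          · rw [Fin.snoc_last, Pi.single_eq_same]
          · intro y
            rw [Fin.snoc_castSucc, Pi.single_eq_of_ne (Fin.castSucc_lt_last y).ne]
            exact hself _
      rw [Matrix.one_apply]
      exact if_congr hkey rfl rfl
    have hcardS : Fintype.card S = 2 ^ m := by
      simp [S, Fintype.card_fun]
    have hlb : 2 ^ m ≤ A.rank := by
      have h1 : (P * A * Q).rank = 2 ^ m := by
        rw [hPAQ, Matrix.rank_one, hcardS]
      calc 2 ^ m = (P * (A * Q)).rank := by rw [← Matrix.mul_assoc, h1]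
        _ ≤ (A * Q).rank := Matrix.rank_mul_le_right P (A * Q)
        _ ≤ A.rank := Matrix.rank_mul_le_left A Q
    have hpow : 2 ^ (m + 1) = 2 ^ m + 2 ^ m := by rw [pow_succ]; ring
    simp only [Nat.add_sub_cancel]
    omega
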